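/- arXiv:2503.15747 — 7 statements merged into one kernel-verified Lean document; each statement's English description precedes it below -/
import Mathlib

section
/- The k-subdivided claw S_k (the graph obtained from K_{1,3} by replacing each edge with a path of length k) has path eccentricity exactly k. -/
open SimpleGraph

/-- The `k`-subdivided claw `S_k`: a center vertex (`none`) with three pendant
paths of length `k` attached. Vertex `some (i, j)` is the `(j+1)`-st vertex on arm `i`. -/
def subClaw (k : ℕ) : SimpleGraph (Option (Fin 3 × Fin k)) :=
  SimpleGraph.fromRel fun a b =>
    match a, b with
    | none, some p => (p.2 : ℕ) = 0
    | some p, some q => p.1 = q.1 ∧ (q.2 : ℕ) = (p.2 : ℕ) + 1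
    | _, _ => False

/-- The `k`-subdivided net `T_k`: a triangle on the vertices `(i, 0)` with a pendant
path of length `k` attached to each triangle vertex. -/
def subNet (k : ℕ) : SimpleGraph (Fin 3 × Fin (k + 1)) :=
  SimpleGraph.fromRel fun a b =>
    ((a.2 : ℕ) = 0 ∧ (b.2 : ℕ) = 0 ∧ a.1 ≠ b.1) ∨ (a.1 = b.1 ∧ (b.2 : ℕ) = (a.2 : ℕ) + 1)

/-- `3P_k`: the disjoint union of three paths on `k` vertices. -/
def threePath (k : ℕ) : SimpleGraph (Fin 3 × Fin k) :=
  SimpleGraph.fromRel fun a b => a.1 = b.1 ∧ (b.2 : ℕ) = (a.2 : ℕ) + 1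

/-- Disjoint union of two simple graphs. -/
def disjSum {α β : Type*} (G : SimpleGraph α) (H : SimpleGraph β) : SimpleGraph (α ⊕ β) :=
  SimpleGraph.fromRel fun a b =>
    match a, b with
    | Sum.inl x, Sum.inl y => G.Adj x y
    | Sum.inr x, Sum.inr y => H.Adj x y
    | _, _ => False

/-- `H` is (isomorphic to) an induced subgraph of `G`. -/
def IsInducedSubgraph {α β : Type*} (H : SimpleGraph α) (G : SimpleGraph β) : Prop :=
  Nonempty (H ↪g G)

/-- `G` is `{S_k, T_k}`-free. -/
def SkTkFree {V : Type*} (k : ℕ) (G : SimpleGraph V) : Prop :=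
  ¬ IsInducedSubgraph (subClaw k) G ∧ ¬ IsInducedSubgraph (subNet k) G

/-- `G` has a path of eccentricity at most `k`. -/
def HasPathEccLE {V : Type*} (G : SimpleGraph V) (k : ℕ) : Prop :=
  ∃ (u v : V) (p : G.Walk u v), p.IsPath ∧ ∀ x : V, ∃ y ∈ p.support, G.dist x y ≤ k

namespace SubClawAux

lemma adj_center (k : ℕ) (i : Fin 3) (j : Fin k) (hj : (j : ℕ) = 0) :
    (subClaw k).Adj (some (i, j)) none := by
  rw [subClaw, SimpleGraph.fromRel_adj]
  exact ⟨by simp, Or.inr hj⟩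

lemma adj_step (k : ℕ) (i : Fin 3) (j j' : Fin k) (h : (j' : ℕ) = (j : ℕ) + 1) :
    (subClaw k).Adj (some (i, j')) (some (i, j)) := by
  rw [subClaw, SimpleGraph.fromRel_adj]
  refine ⟨?_, Or.inr ⟨rfl, h⟩⟩
  simp only [ne_eq, Option.some.injEq, Prod.mk.injEq, true_and]
  intro hj
  rw [hj] at h
  omega

/-- A walk from the `j`-th vertex of arm `i` down to the center, of length `j+1`. -/
def armWalk (k : ℕ) (i : Fin 3) :
    (j : ℕ) → (h : j < k) → (subClaw k).Walk (some (i, ⟨j, h⟩)) none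
  | 0, h => SimpleGraph.Walk.cons (adj_center k i ⟨0, h⟩ rfl) SimpleGraph.Walk.nil
  | (m + 1), h =>
      SimpleGraph.Walk.cons (adj_step k i ⟨m, by omega⟩ ⟨m + 1, h⟩ rfl)
        (armWalk k i m (by omega))

lemma armWalk_length (k : ℕ) (i : Fin 3) :
    ∀ (j : ℕ) (h : j < k), (armWalk k i j h).length = j + 1
  | 0, h => rfl
  | (m + 1), h => by
      simp only [armWalk, SimpleGraph.Walk.length_cons, armWalk_length k i m]

lemma reach_center (k : ℕ) : ∀ a, (subClaw k).Reachable a none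
  | none => SimpleGraph.Reachable.refl _
  | some (i, j) => ⟨armWalk k i j.1 j.2⟩

/-- Potential function for arm `i`. -/
def pot (k : ℕ) (i : Fin 3) : Option (Fin 3 × Fin k) → ℕ
  | none => 0
  | some (i', j) => if i' = i then (j : ℕ) + 1 else 0

lemma pot_adj {k : ℕ} (i : Fin 3) {a b : Option (Fin 3 × Fin k)}
    (h : (subClaw k).Adj a b) : pot k i a ≤ pot k i b + 1 := by
  rw [subClaw, SimpleGraph.fromRel_adj] at h
  rcases a with - | ⟨i1, j1⟩ <;> rcases b with - | ⟨i2, j2⟩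
  · simp [pot]
  · simp [pot]
  · obtain ⟨-, h | h⟩ := h
    · exact absurd h not_false
    · simp only at h
      by_cases hi : i1 = i <;> simp [pot, hi, h]
  · obtain ⟨-, ⟨h1, h2⟩ | ⟨h1, h2⟩⟩ := h
    · simp only at h1 h2
      rw [← h1]
      by_cases hi : i1 = i <;> simp [pot, hi] <;> omega
    · simp only at h1 h2
      rw [h1]
      by_cases hi : i1 = i <;> simp [pot, hi] <;> omega

lemma pot_walk {k : ℕ} (i : Fin 3) {a b : Option (Fin 3 × Fin k)}
    (w : (subClaw k).Walk a b) : pot k i a ≤ pot k i b + w.length := by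
  induction w with
  | nil => simp
  | cons h w ih =>
      have := pot_adj i h
      simp only [SimpleGraph.Walk.length_cons]
      omega

lemma adj_same_arm {k : ℕ} {i1 i2 : Fin 3} {j1 j2 : Fin k}
    (h : (subClaw k).Adj (some (i1, j1)) (some (i2, j2))) : i1 = i2 := by
  rw [subClaw, SimpleGraph.fromRel_adj] at h
  obtain ⟨-, h | h⟩ := h
  · exact h.1
  · exact h.1.symm

/-- A walk avoiding the center stays in the arm of its start. -/
lemma stay_arm {k : ℕ} : ∀ {a b : Option (Fin 3 × Fin k)} (w : (subClaw k).Walk a b),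
    none ∉ w.support → ∀ (i : Fin 3) (j : Fin k), a = some (i, j) →
    ∀ y ∈ w.support, ∃ j', y = some (i, j') := by
  intro a b w
  induction w with
  | nil =>
      intro _ i j ha y hy
      simp only [SimpleGraph.Walk.support_nil, List.mem_singleton] at hy
      exact ⟨j, hy.trans ha⟩
  | @cons u x v hadj w ih =>
      intro hnone i j ha y hy
      simp only [SimpleGraph.Walk.support_cons, List.mem_cons] at hnone hy
      push_neg at hnone
      obtain ⟨hne, hnone'⟩ := hnone
      have hx : x ≠ none := fun h => hnone' (h ▸ w.start_mem_support)
      obtain ⟨⟨i', j'⟩, hx'⟩ := Option.ne_none_iff_exists'.mp hx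
      subst ha hx'
      have hii : i = i' := adj_same_arm hadj
      subst hii
      rcases hy with hy | hy
      · exact ⟨j, hy⟩
      · exact ih hnone' i j' rfl y hy

/-- A walk from the center visiting the center only once stays in one arm. -/
lemma from_center {k : ℕ} {b : Option (Fin 3 × Fin k)} (w : (subClaw k).Walk none b)
    (hnone : none ∉ w.support.tail) :
    ∃ i : Fin 3, ∀ y ∈ w.support, y = none ∨ ∃ j, y = some (i, j) := by
  cases w with
  | nil => exact ⟨0, fun y hy => Or.inl (by simpa using hy)⟩
  | @cons u x v hadj w =>
      simp only [SimpleGraph.Walk.support_cons, List.tail_cons] at hnone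
      have hx : x ≠ none := fun h => hnone (h ▸ w.start_mem_support)
      obtain ⟨⟨i, j⟩, hx'⟩ := Option.ne_none_iff_exists'.mp hx
      subst hx'
      refine ⟨i, fun y hy => ?_⟩
      simp only [SimpleGraph.Walk.support_cons, List.mem_cons] at hy
      rcases hy with hy | hy
      · exact Or.inl hy
      · exact Or.inr (stay_arm w hnone i j rfl y hy)

lemma two_ne (i1 i2 : Fin 3) : ∃ i : Fin 3, i ≠ i1 ∧ i ≠ i2 := by
  fin_cases i1 <;> fin_cases i2 <;> decide

/-- Every path avoids some arm entirely. -/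
lemma avoid_arm {k : ℕ} {u v : Option (Fin 3 × Fin k)} (p : (subClaw k).Walk u v)
    (hp : p.IsPath) : ∃ i : Fin 3, ∀ j : Fin k, some (i, j) ∉ p.support := by
  classical
  by_cases hnone : none ∈ p.support
  · set q1 := p.takeUntil none hnone with hq1
    set q2 := p.dropUntil none hnone with hq2
    have hsplit : ∀ y ∈ p.support, y ∈ q1.support ∨ y ∈ q2.support := by
      intro y hy
      rw [← p.take_spec hnone, SimpleGraph.Walk.mem_support_append_iff] at hy
      exact hy
    -- q1.reverse : Walk none u
    have h1 : ∃ i : Fin 3, ∀ y ∈ q1.support, y = none ∨ ∃ j, y = some (i, j) := by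
      have hpath : q1.reverse.IsPath := (hp.takeUntil hnone).reverse
      have htail : none ∉ q1.reverse.support.tail := by
        have hnd := hpath.support_nodup
        rw [q1.reverse.support_eq_cons] at hnd
        exact (List.nodup_cons.mp hnd).1
      obtain ⟨i, hi⟩ := from_center q1.reverse htail
      refine ⟨i, fun y hy => hi y ?_⟩
      rw [SimpleGraph.Walk.support_reverse, List.mem_reverse]
      exact hy
    have h2 : ∃ i : Fin 3, ∀ y ∈ q2.support, y = none ∨ ∃ j, y = some (i, j) := by
      have hpath : q2.IsPath := hp.dropUntil hnone
      have htail : none ∉ q2.support.tail := by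
        have hnd := hpath.support_nodup
        rw [q2.support_eq_cons] at hnd
        exact (List.nodup_cons.mp hnd).1
      exact from_center q2 htail
    obtain ⟨i1, hi1⟩ := h1
    obtain ⟨i2, hi2⟩ := h2
    obtain ⟨i, hii1, hii2⟩ := two_ne i1 i2
    refine ⟨i, fun j hj => ?_⟩
    rcases hsplit _ hj with hy | hy
    · rcases hi1 _ hy with h | ⟨j', h⟩
      · exact (Option.some_ne_none _ h).elim
      · exact hii1 (by injection h with h'; exact congrArg Prod.fst h')
    · rcases hi2 _ hy with h | ⟨j', h⟩
      · exact (Option.some_ne_none _ h).elim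
      · exact hii2 (by injection h with h'; exact congrArg Prod.fst h')
  · -- center not in support: whole path in one arm
    have hu : u ≠ none := fun h => hnone (h ▸ p.start_mem_support)
    obtain ⟨⟨i0, j0⟩, hu'⟩ := Option.ne_none_iff_exists'.mp hu
    subst hu'
    have := stay_arm p hnone i0 j0 rfl
    obtain ⟨i, hii, -⟩ := two_ne i0 i0
    refine ⟨i, fun j hj => ?_⟩
    obtain ⟨j', h⟩ := this _ hj
    exact hii (by injection h with h'; exact congrArg Prod.fst h')

end SubClawAux

open SubClawAux in
/-- The `k`-subdivided claw `S_k` has path eccentricity exactly `k`: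
it has a path of eccentricity at most `k`, and every path has eccentricity at least `k`. -/
theorem stmt0 (k : ℕ) (hk : 1 ≤ k) :
    HasPathEccLE (subClaw k) k ∧
    ∀ (u v : Option (Fin 3 × Fin k)) (p : (subClaw k).Walk u v), p.IsPath →
      ∃ x, ∀ y ∈ p.support, k ≤ (subClaw k).dist x y := by
  constructor
  · -- the single-vertex path at the center has eccentricity ≤ k
    refine ⟨none, none, SimpleGraph.Walk.nil, SimpleGraph.Walk.IsPath.nil, fun x => ?_⟩
    refine ⟨none, by simp, ?_⟩
    match x with
    | none => rw [SimpleGraph.dist_self]; omega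
    | some (i, j) =>
        have h := SimpleGraph.dist_le (armWalk k i j.1 j.2)
        rw [armWalk_length] at h
        calc (subClaw k).dist (some (i, j)) none
            = (subClaw k).dist (some (i, ⟨j.1, j.2⟩)) none := by rw [Fin.eta]
          _ ≤ (j : ℕ) + 1 := h
          _ ≤ k := j.2
  · intro u v p hp
    obtain ⟨i, hi⟩ := avoid_arm p hp
    have hk1 : k - 1 < k := by omega
    refine ⟨some (i, ⟨k - 1, hk1⟩), fun y hy => ?_⟩
    have hfy : pot k i y = 0 := by
      match y with
      | none => rfl
      | some (i', j') =>
          have : i' ≠ i := fun h => hi j' (h ▸ hy)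
          simp [pot, this]
    have hreach : (subClaw k).Reachable (some (i, ⟨k - 1, hk1⟩)) y :=
      (reach_center k _).trans (reach_center k y).symm
    obtain ⟨w, hw⟩ := hreach.exists_walk_length_eq_dist
    have hb := pot_walk i w
    have hfx : pot k i (some (i, ⟨k - 1, hk1⟩)) = k := by
      simp [pot]; omega
    rw [hfx, hfy, hw] at hb
    omega
end

section
/- The k-subdivided net T_k (the graph obtained by appending a pendant path of length k to each vertex of a triangle K_3) has path eccentricity exactly k. -/
open SimpleGraph

section Aux

variable {k : ℕ}

lemma subNet_adj {a b : Fin 3 × Fin (k+1)} :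
    (subNet k).Adj a b ↔ a ≠ b ∧
      ((((a.2:ℕ) = 0 ∧ (b.2:ℕ) = 0 ∧ a.1 ≠ b.1) ∨ (a.1 = b.1 ∧ (b.2:ℕ) = (a.2:ℕ)+1)) ∨
       (((b.2:ℕ) = 0 ∧ (a.2:ℕ) = 0 ∧ b.1 ≠ a.1) ∨ (b.1 = a.1 ∧ (a.2:ℕ) = (b.2:ℕ)+1))) := by
  simp [subNet, fromRel_adj]

lemma adj_step (i : Fin 3) (j : ℕ) (h : j + 1 < k + 1) :
    (subNet k).Adj (i, ⟨j+1, h⟩) (i, ⟨j, by omega⟩) := by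
  rw [subNet_adj]
  refine ⟨?_, Or.inr (Or.inr ⟨rfl, rfl⟩)⟩
  intro e
  simp [Prod.ext_iff, Fin.ext_iff] at e

lemma adj_tri (i j : Fin 3) (h : i ≠ j) :
    (subNet k).Adj (i, ⟨0, Nat.succ_pos k⟩) (j, ⟨0, Nat.succ_pos k⟩) := by
  rw [subNet_adj]
  exact ⟨by simp [Prod.ext_iff, h], Or.inl (Or.inl ⟨rfl, rfl, h⟩)⟩

def armWalk (k : ℕ) (i : Fin 3) : (j : ℕ) → (h : j < k + 1) →
    (subNet k).Walk (i, ⟨j, h⟩) (i, ⟨0, Nat.succ_pos k⟩)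
  | 0, _ => SimpleGraph.Walk.nil
  | j+1, h => SimpleGraph.Walk.cons (adj_step i j h) (armWalk k i j (by omega))

lemma armWalk_length (k : ℕ) (i : Fin 3) : ∀ (j : ℕ) (h : j < k + 1),
    (armWalk k i j h).length = j
  | 0, _ => rfl
  | j+1, h => by simp only [armWalk]; rw [Walk.length_cons, armWalk_length k i j]

lemma reach (a b : Fin 3 × Fin (k+1)) : (subNet k).Reachable a b := by
  have ha : (subNet k).Reachable a (a.1, ⟨0, Nat.succ_pos k⟩) :=
    ⟨armWalk k a.1 a.2.val a.2.isLt⟩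
  have hb : (subNet k).Reachable b (b.1, ⟨0, Nat.succ_pos k⟩) :=
    ⟨armWalk k b.1 b.2.val b.2.isLt⟩
  refine ha.trans (Reachable.trans ?_ hb.symm)
  by_cases h : a.1 = b.1
  · rw [h]
  · exact (adj_tri a.1 b.1 h).reachable

def phi (i : Fin 3) (a : Fin 3 × Fin (k+1)) : ℤ :=
  if a.1 = i then ((a.2 : ℕ) : ℤ) else -1 - ((a.2 : ℕ) : ℤ)

lemma phi_adj (i : Fin 3) {a b : Fin 3 × Fin (k+1)} (h : (subNet k).Adj a b) :
    phi i a - phi i b ≤ 1 := by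
  rw [subNet_adj] at h
  obtain ⟨-, h⟩ := h
  unfold phi
  rcases h with (⟨h1,h2,h3⟩|⟨h1,h2⟩)|(⟨h1,h2,h3⟩|⟨h1,h2⟩) <;>
    split_ifs with e1 e2 e2 <;> simp_all <;> omega

lemma phi_walk (i : Fin 3) {a b : Fin 3 × Fin (k+1)} (w : (subNet k).Walk a b) :
    phi i a - phi i b ≤ w.length := by
  induction w with
  | nil => simp
  | cons h w ih =>
    have h1 := phi_adj i h
    simp only [Walk.length_cons]
    push_cast
    omega

lemma dist_ge (i : Fin 3) (x y : Fin 3 × Fin (k+1)) (h : (k:ℤ) ≤ phi i x - phi i y) :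
    k ≤ (subNet k).dist x y := by
  obtain ⟨w, hw⟩ := (reach x y).exists_walk_length_eq_dist
  have h2 := phi_walk i w
  omega

lemma through_zero (i : Fin 3) {a b : Fin 3 × Fin (k+1)} (w : (subNet k).Walk a b)
    (ha : ¬ (a.1 = i ∧ 1 ≤ (a.2:ℕ))) (hb : b.1 = i ∧ 1 ≤ (b.2:ℕ)) :
    ((i, ⟨0, Nat.succ_pos k⟩) : Fin 3 × Fin (k+1)) ∈ w.support := by
  induction w with
  | nil => exact absurd hb ha
  | @cons a c b h w ih =>
    by_cases hc : c.1 = i ∧ 1 ≤ (c.2:ℕ)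
    · have : a = ((i, ⟨0, Nat.succ_pos k⟩) : Fin 3 × Fin (k+1)) := by
        rw [subNet_adj] at h
        obtain ⟨-, h⟩ := h
        rcases h with (⟨h1,h2,h3⟩|⟨h1,h2⟩)|(⟨h1,h2,h3⟩|⟨h1,h2⟩)
        · omega
        · have ha1 : a.1 = i := h1.trans hc.1
          have ha2 : (a.2:ℕ) = 0 := by
            by_contra hne; exact ha ⟨ha1, by omega⟩
          exact Prod.ext ha1 (Fin.ext ha2)
        · omega
        · exact absurd ⟨h1.symm ▸ hc.1, by omega⟩ ha
      rw [Walk.support_cons, this]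
      exact List.mem_cons_self
    · rw [Walk.support_cons]
      exact List.mem_cons_of_mem _ (ih hc hb)

end Aux

/-- The `k`-subdivided net `T_k` has path eccentricity exactly `k`:
it has a path of eccentricity at most `k`, and every path has eccentricity at least `k`. -/
theorem stmt1 (k : ℕ) (hk : 1 ≤ k) :
    HasPathEccLE (subNet k) k ∧
    ∀ (u v : Fin 3 × Fin (k + 1)) (p : (subNet k).Walk u v), p.IsPath →
      ∃ x, ∀ y ∈ p.support, k ≤ (subNet k).dist x y := by
  constructor
  · refine ⟨(0, ⟨0, Nat.succ_pos k⟩), (1, ⟨0, Nat.succ_pos k⟩),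
      Walk.cons (adj_tri 0 2 (by decide)) (Walk.cons (adj_tri 2 1 (by decide)) Walk.nil),
      ?_, ?_⟩
    · rw [Walk.isPath_def]
      simp only [Walk.support_cons, Walk.support_nil]
      simp [Prod.ext_iff]
    · intro x
      refine ⟨(x.1, ⟨0, Nat.succ_pos k⟩), ?_, ?_⟩
      · obtain ⟨i, j⟩ := x
        fin_cases i <;> simp only [Walk.support_cons, Walk.support_nil] <;> simp
      · calc (subNet k).dist x (x.1, ⟨0, Nat.succ_pos k⟩)
            ≤ (armWalk k x.1 x.2.val x.2.isLt).length := SimpleGraph.dist_le _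
          _ = x.2.val := armWalk_length k x.1 x.2.val x.2.isLt
          _ ≤ k := by omega
  · intro u v p hp
    have hex : ∀ a b : Fin 3, ∃ i : Fin 3, i ≠ a ∧ i ≠ b := by decide
    obtain ⟨i, hiu, hiv⟩ := hex u.1 v.1
    have hsupp : ∀ y ∈ p.support, ¬ (y.1 = i ∧ 1 ≤ (y.2:ℕ)) := by
      intro y hy hdeep
      rw [Walk.mem_support_iff_exists_append] at hy
      obtain ⟨q, r, rfl⟩ := hy
      have h1 : ((i, ⟨0, Nat.succ_pos k⟩) : Fin 3 × Fin (k+1)) ∈ q.support :=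
        through_zero i q (by rintro ⟨h, -⟩; exact hiu h.symm) hdeep
      have h2 : ((i, ⟨0, Nat.succ_pos k⟩) : Fin 3 × Fin (k+1)) ∈ r.support := by
        have hh := through_zero i r.reverse (by rintro ⟨h, -⟩; exact hiv h.symm) hdeep
        rwa [Walk.support_reverse, List.mem_reverse] at hh
      have hnd := hp.support_nodup
      rw [Walk.support_append] at hnd
      have hdisj := List.disjoint_of_nodup_append hnd
      have hne : ((i, ⟨0, Nat.succ_pos k⟩) : Fin 3 × Fin (k+1)) ≠ y := by
        intro e; rw [← e] at hdeep; simp at hdeep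
      rw [Walk.support_eq_cons] at h2
      rcases List.mem_cons.mp h2 with e | h2'
      · exact hne e
      · exact hdisj h1 h2'
    refine ⟨(i, ⟨k, by omega⟩), ?_⟩
    intro y hy
    apply dist_ge i
    have hy' := hsupp y hy
    by_cases hyi : y.1 = i
    · have h0 : (y.2:ℕ) = 0 := by by_contra h; exact hy' ⟨hyi, by omega⟩
      simp [phi, hyi, h0]
    · simp only [phi, hyi, if_false, Prod.fst, if_pos rfl, eq_self_iff_true, if_true]
      omega
end

section
/- For every positive integer k, every path in T_k has eccentricity at least k, i.e., for every path P in T_k there exists a vertex of T_k at distance at least k from every vertex of P. -/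
open SimpleGraph

variable {k : ℕ}

lemma subNet_adj_iff {a b : Fin 3 × Fin (k+1)} : (subNet k).Adj a b ↔
    a ≠ b ∧ ((((a.2:ℕ)=0 ∧ (b.2:ℕ)=0 ∧ a.1 ≠ b.1) ∨ (a.1 = b.1 ∧ (b.2:ℕ) = (a.2:ℕ)+1))
      ∨ (((b.2:ℕ)=0 ∧ (a.2:ℕ)=0 ∧ b.1 ≠ a.1) ∨ (b.1 = a.1 ∧ (a.2:ℕ) = (b.2:ℕ)+1))) := by
  rw [subNet, fromRel_adj]

lemma cross_lemma {i : Fin 3} {a b : Fin 3 × Fin (k+1)} (w : (subNet k).Walk a b)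
    (h1 : a.1 = i) (h2 : b.1 ≠ i) : (i, (0 : Fin (k+1))) ∈ w.support := by
  induction w with
  | nil => exact absurd h1 h2
  | @cons a c b h w ih =>
    rw [Walk.support_cons]
    by_cases ha : a = (i, (0 : Fin (k+1)))
    · exact ha ▸ List.mem_cons_self
    · have ha2 : (a.2 : ℕ) ≠ 0 := by
        intro h0
        apply ha
        have : a.2 = (0 : Fin (k+1)) := Fin.ext h0
        rw [← h1, ← this]
      obtain ⟨-, hadj⟩ := subNet_adj_iff.mp h
      have hc1 : c.1 = i := by
        rcases hadj with (⟨h,_,_⟩|⟨h,_⟩)|(⟨_,h,_⟩|⟨h,_⟩) <;> first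
          | exact absurd h ha2 | (rw [← h1, h]) | (rw [← h1, ← h])
      exact List.mem_cons_of_mem _ (ih hc1 h2)

lemma endpoint_arm {u v : Fin 3 × Fin (k+1)} {p : (subNet k).Walk u v} (hp : p.IsPath)
    {i : Fin 3} {j : Fin (k+1)} (hj : 1 ≤ (j:ℕ)) (hm : (i, j) ∈ p.support) :
    u.1 = i ∨ v.1 = i := by
  by_contra hc
  push_neg at hc
  obtain ⟨hu, hv⟩ := hc
  have ht : (i, (0:Fin (k+1))) ∈ (p.takeUntil _ hm).support := by
    have := cross_lemma (p.takeUntil _ hm).reverse rfl hu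
    simpa using this
  have hd : (i, (0:Fin (k+1))) ∈ (p.dropUntil _ hm).support :=
    cross_lemma (p.dropUntil _ hm) rfl hv
  have hne : (i,(0:Fin (k+1))) ≠ (i,j) := by
    intro h
    have := congrArg (fun x => ((x.2 : Fin (k+1)) : ℕ)) h
    simp at this
    omega
  have hd' : (i,(0:Fin (k+1))) ∈ (p.dropUntil _ hm).support.tail := by
    rw [(p.dropUntil _ hm).support_eq_cons] at hd
    rcases List.mem_cons.mp hd with h|h
    · exact absurd h hne
    · exact h
  have hsup : (p.takeUntil _ hm).support ++ (p.dropUntil _ hm).support.tail = p.support := by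
    rw [← Walk.support_append, Walk.take_spec]
  have hnd := hp.support_nodup
  rw [← hsup, List.nodup_append] at hnd
  exact hnd.2.2 _ ht _ hd' rfl

def pot (k : ℕ) (i : Fin 3) (a : Fin 3 × Fin (k+1)) : ℕ :=
  if a.1 = i then k - (a.2:ℕ) else k + (a.2:ℕ)

lemma pot_lip {i : Fin 3} {a b : Fin 3 × Fin (k+1)} (h : (subNet k).Adj a b) :
    pot k i b ≤ pot k i a + 1 := by
  obtain ⟨-, hadj⟩ := subNet_adj_iff.mp h
  have ha2 := a.2.isLt
  have hb2 := b.2.isLt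
  unfold pot
  by_cases hai : a.1 = i <;> by_cases hbi : b.1 = i <;>
    simp only [hai, hbi, if_pos, if_neg, if_true, if_false] <;>
    rcases hadj with (⟨h1,h2,h3⟩|⟨h1,h2⟩)|(⟨h1,h2,h3⟩|⟨h1,h2⟩) <;>
    first | omega | simp_all | (exfalso; simp_all)

lemma pot_walk {i : Fin 3} {a b : Fin 3 × Fin (k+1)} (w : (subNet k).Walk a b) :
    pot k i b ≤ pot k i a + w.length := by
  induction w with
  | nil => simp
  | cons h w ih =>
    have := pot_lip (i := i) h
    rw [Walk.length_cons]
    omega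

lemma reach_base (i : Fin 3) (j : Fin (k+1)) :
    (subNet k).Reachable (i, j) (i, (0 : Fin (k+1))) := by
  induction j using Fin.induction with
  | zero => rfl
  | succ j ih =>
    refine (Adj.reachable ?_).trans ih
    rw [subNet_adj_iff]
    refine ⟨?_, Or.inr (Or.inr ⟨rfl, by simp⟩)⟩
    intro h
    have := congrArg (fun x => ((x.2 : Fin (k+1)) : ℕ)) h
    simp at this

lemma reach_all (i i' : Fin 3) (j j' : Fin (k+1)) :
    (subNet k).Reachable (i, j) (i', j') := by
  refine (reach_base i j).trans (Reachable.trans ?_ (reach_base i' j').symm)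
  by_cases h : i = i'
  · rw [h]
  · refine Adj.reachable ?_
    rw [subNet_adj_iff]
    exact ⟨by simp [Prod.ext_iff, h], Or.inl (Or.inl ⟨rfl, rfl, h⟩)⟩

lemma dist_ge_s3 {i : Fin 3} {y : Fin 3 × Fin (k+1)} (hy : y.1 ≠ i ∨ (y.2:ℕ) = 0) :
    k ≤ (subNet k).dist (i, (⟨k, Nat.lt_succ_self k⟩ : Fin (k+1))) y := by
  obtain ⟨w, hw⟩ :=
    (show (subNet k).Reachable (i, (⟨k, Nat.lt_succ_self k⟩ : Fin (k+1))) y from by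
      rw [show y = (y.1, y.2) from rfl]; exact reach_all _ _ _ _).exists_walk_length_eq_dist
  have h1 := pot_walk (i := i) w
  have h2 : pot k i (i, (⟨k, Nat.lt_succ_self k⟩ : Fin (k+1))) = 0 := by simp [pot]
  have h3 : k ≤ pot k i y := by
    unfold pot
    rcases hy with h|h
    · rw [if_neg h]; omega
    · split <;> omega
  omega

/-- For every positive integer `k`, every path in `T_k` has eccentricity at least `k`:
some vertex is at distance at least `k` from every vertex of the path. -/
theorem stmt3 (k : ℕ) (hk : 1 ≤ k)
    (u v : Fin 3 × Fin (k + 1)) (p : (subNet k).Walk u v) (hp : p.IsPath) :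
    ∃ x, ∀ y ∈ p.support, k ≤ (subNet k).dist x y := by
  obtain ⟨i, hiu, hiv⟩ : ∃ i : Fin 3, i ≠ u.1 ∧ i ≠ v.1 :=
    (show ∀ a b : Fin 3, ∃ c : Fin 3, c ≠ a ∧ c ≠ b by decide) u.1 v.1
  refine ⟨(i, ⟨k, Nat.lt_succ_self k⟩), fun y hy => ?_⟩
  apply dist_ge_s3
  by_contra hc
  push_neg at hc
  obtain ⟨h1, h2⟩ := hc
  have hmem : (i, y.2) ∈ p.support := by rw [← h1, Prod.mk.eta]; exact hy
  rcases endpoint_arm hp (by omega) hmem with h | h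
  · exact hiu h.symm
  · exact hiv h.symm
end

section
/- Every connected 3P_2-free graph has a longest path that is dominating (every vertex of the graph is in the path or adjacent to a vertex of the path). -/
open SimpleGraph

section Aux

set_option maxHeartbeats 1600000
set_option linter.unusedSectionVars false

lemma threePath2_adj : ∀ p q : Fin 3 × Fin 2, (threePath 2).Adj p q ↔ (p.1 = q.1 ∧ ¬ p.2 = q.2) := by
  intro p q
  rw [threePath, SimpleGraph.fromRel_adj]
  revert q
  revert p
  decide

variable {V : Type} [Fintype V] {G : SimpleGraph V}

open Classical in
noncomputable def nclAux (G : SimpleGraph V) (l : List V) : Finset V :=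
  Finset.univ.filter (fun x => x ∈ l ∨ ∃ y ∈ l, G.Adj x y)

lemma mem_nclAux {l : List V} {x : V} : x ∈ nclAux G l ↔ x ∈ l ∨ ∃ y ∈ l, G.Adj x y := by
  classical simp [nclAux]

def IsGoodAux (G : SimpleGraph V) (l : List V) : Prop := l.Chain' G.Adj ∧ l.Nodup ∧ l ≠ []

lemma exists_walk_of_support : ∀ (l : List V), l.Chain' G.Adj → l ≠ [] →
    ∃ (u v : V) (w : G.Walk u v), w.support = l := by
  intro l
  induction l with
  | nil => simp
  | cons a l ih =>
    intro hc _
    cases l with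
    | nil => exact ⟨a, a, SimpleGraph.Walk.nil, rfl⟩
    | cons b l =>
      obtain ⟨u, v, w, hw⟩ := ih (List.isChain_cons_cons.1 hc).2 (by simp)
      have hu : u = b := by
        have := w.support_eq_cons
        rw [hw] at this; exact (List.cons.injEq .. ▸ this).1.symm
      subst hu
      exact ⟨a, v, SimpleGraph.Walk.cons (List.isChain_cons_cons.1 hc).1 w, by simp [hw]⟩

lemma find_attach {l : List V} {x z : V} (hx1 : x ∉ l) (hx2 : ∀ y ∈ l, ¬G.Adj x y)
    (w : G.Walk x z) (hz : z ∈ l) :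
    ∃ c a b, c ∉ l ∧ (∀ y ∈ l, ¬G.Adj c y) ∧ G.Adj c a ∧ a ∉ l ∧ b ∈ l ∧ G.Adj a b := by
  induction w with
  | nil => exact absurd hz hx1
  | @cons x y z hxy w ih =>
    by_cases hyl : y ∈ l
    · exact absurd hxy (fun h => hx2 y hyl h)
    · by_cases hy2 : ∀ u ∈ l, ¬G.Adj y u
      · exact ih hyl hy2 hz
      · push_neg at hy2
        obtain ⟨b, hb, hyb⟩ := hy2
        exact ⟨x, y, b, hx1, hx2, hxy, hyl, hb, hyb⟩

lemma exists_maxAux (G : SimpleGraph V) (hne : Nonempty V) :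
    ∃ l₀ : List V, IsGoodAux G l₀ ∧ (∀ l, IsGoodAux G l → l.length ≤ l₀.length) ∧
      (∀ l, IsGoodAux G l → l.length = l₀.length → (nclAux G l).card ≤ (nclAux G l₀).card) := by
  classical
  set n := Fintype.card V with hn
  set m : List V → ℕ := fun l => l.length * (n + 1) + (nclAux G l).card with hm
  have hcard : ∀ l : List V, (nclAux G l).card ≤ n := fun l => by
    simpa [hn] using Finset.card_le_univ (nclAux G l)
  have hlen : ∀ l : List V, IsGoodAux G l → l.length ≤ n := fun l hl => hl.2.1.length_le_card
  set S : Set ℕ := {k | ∃ l, IsGoodAux G l ∧ m l = k} with hS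
  have hSne : S.Nonempty := by
    obtain ⟨x⟩ := hne
    exact ⟨m [x], [x], ⟨List.isChain_singleton x, by simp, by simp⟩, rfl⟩
  have hSbdd : BddAbove S := by
    refine ⟨n * (n + 1) + n, fun k hk => ?_⟩
    obtain ⟨l, hl, rfl⟩ := hk
    have := hlen l hl
    have := hcard l
    simp only [hm]
    nlinarith
  obtain ⟨l₀, hl₀, hml₀⟩ := Nat.sSup_mem hSne hSbdd
  have hmax : ∀ l, IsGoodAux G l → m l ≤ m l₀ := fun l hl =>
    hml₀ ▸ le_csSup hSbdd ⟨l, hl, rfl⟩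
  have hmaxlen : ∀ l, IsGoodAux G l → l.length ≤ l₀.length := by
    intro l hl
    by_contra h
    push_neg at h
    have h1 := hmax l hl
    have h2 := hcard l₀
    have h3 := hcard l
    simp only [hm] at h1
    nlinarith
  refine ⟨l₀, hl₀, hmaxlen, fun l hl hlen' => ?_⟩
  have h1 := hmax l hl
  simp only [hm, hlen'] at h1
  omega

lemma embed_aux (c a v₁ v₂ vN1 vN : V)
    (hca : G.Adj c a) (hv1v2 : G.Adj v₁ v₂) (hvv : G.Adj vN1 vN)
    (hcv1 : ¬G.Adj c v₁) (hcv2 : ¬G.Adj c v₂) (hcvN1 : ¬G.Adj c vN1) (hcvN : ¬G.Adj c vN)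
    (hav1 : ¬G.Adj a v₁) (hav2 : ¬G.Adj a v₂) (havN1 : ¬G.Adj a vN1) (havN : ¬G.Adj a vN)
    (h1N1 : ¬G.Adj v₁ vN1) (h1N : ¬G.Adj v₁ vN) (h2N1 : ¬G.Adj v₂ vN1) (h2N : ¬G.Adj v₂ vN)
    (d_ca : c ≠ a) (d_c1 : c ≠ v₁) (d_c2 : c ≠ v₂) (d_cN1 : c ≠ vN1) (d_cN : c ≠ vN)
    (d_a1 : a ≠ v₁) (d_a2 : a ≠ v₂) (d_aN1 : a ≠ vN1) (d_aN : a ≠ vN)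
    (d_12 : v₁ ≠ v₂) (d_1N1 : v₁ ≠ vN1) (d_1N : v₁ ≠ vN)
    (d_2N1 : v₂ ≠ vN1) (d_2N : v₂ ≠ vN) (d_N1N : vN1 ≠ vN) :
    IsInducedSubgraph (threePath 2) G := by
  refine ⟨⟨⟨fun p => ![![c, a], ![v₁, v₂], ![vN1, vN]] p.1 p.2, ?_⟩, ?_⟩⟩
  · intro p q h
    fin_cases p <;> fin_cases q <;> simp_all
  · intro p q
    show G.Adj _ _ ↔ (threePath 2).Adj p q
    have hadj3 := threePath2_adj
    have hac : G.Adj a c := hca.symm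
    have hv2v1 : G.Adj v₂ v₁ := hv1v2.symm
    have hvv' : G.Adj vN vN1 := hvv.symm
    have hv1c : ¬G.Adj v₁ c := fun h => hcv1 h.symm
    have hv2c : ¬G.Adj v₂ c := fun h => hcv2 h.symm
    have hvN1c : ¬G.Adj vN1 c := fun h => hcvN1 h.symm
    have hvNc : ¬G.Adj vN c := fun h => hcvN h.symm
    have hv1a : ¬G.Adj v₁ a := fun h => hav1 h.symm
    have hv2a : ¬G.Adj v₂ a := fun h => hav2 h.symm
    have hvN1a : ¬G.Adj vN1 a := fun h => havN1 h.symm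
    have hvNa : ¬G.Adj vN a := fun h => havN h.symm
    have hN11 : ¬G.Adj vN1 v₁ := fun h => h1N1 h.symm
    have hN1 : ¬G.Adj vN v₁ := fun h => h1N h.symm
    have hN12 : ¬G.Adj vN1 v₂ := fun h => h2N1 h.symm
    have hN2 : ¬G.Adj vN v₂ := fun h => h2N h.symm
    fin_cases p <;> fin_cases q <;> rw [hadj3] <;>
      simp [hca, hac, hv1v2, hv2v1, hvv, hvv', hcv1, hcv2, hcvN1, hcvN, hav1, hav2, havN1,
        havN, h1N1, h1N, h2N1, h2N, hv1c, hv2c, hvN1c, hvNc, hv1a, hv2a, hvN1a, hvNa,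
        hN11, hN1, hN12, hN2]

end Aux

section Main
open List
set_option maxHeartbeats 1600000
set_option linter.unusedSectionVars false
variable {V : Type} [Fintype V] {G : SimpleGraph V}

lemma main_dom (G : SimpleGraph V) (hconn : G.Connected)
    (hfree : ¬ IsInducedSubgraph (threePath 2) G) :
    ∃ l₀ : List V, IsGoodAux G l₀ ∧ (∀ l, IsGoodAux G l → l.length ≤ l₀.length) ∧
      ∀ x : V, x ∈ l₀ ∨ ∃ y ∈ l₀, G.Adj x y := by
  classical
  obtain ⟨l₀, hgood, hmaxlen, hmaxcard⟩ := exists_maxAux G hconn.nonempty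
  refine ⟨l₀, hgood, hmaxlen, ?_⟩
  obtain ⟨hchain, hnodup, hnenil⟩ := hgood
  intro x
  by_contra hx
  push_neg at hx
  obtain ⟨hx1, hx2⟩ := hx
  obtain ⟨z, hz⟩ := List.exists_mem_of_ne_nil l₀ hnenil
  obtain ⟨c, a, b, hc1, hc2, hca, ha, hb, hab⟩ :=
    find_attach hx1 hx2 ((hconn x z).some) hz
  have contra : ∀ l : List V, l.Chain' G.Adj → l.Nodup → l₀.length < l.length → False := by
    intro l hc hn hlen
    have := hmaxlen l ⟨hc, hn, by rintro rfl; simp at hlen⟩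
    omega
  have hA1 : ∀ y, y ∉ l₀ → ∀ h ∈ l₀.head?, ¬ G.Adj y h := by
    intro y hy h hh hadj
    refine contra (y :: l₀) (List.isChain_cons.2 ⟨?_, hchain⟩) (by simp [hy, hnodup]) (by simp)
    intro z hz
    rw [hh] at hz
    exact (Option.mem_some_iff.1 hz) ▸ hadj
  have hA2 : ∀ y, y ∉ l₀ → ∀ h ∈ l₀.getLast?, ¬ G.Adj y h := by
    intro y hy h hh hadj
    refine contra (l₀ ++ [y]) (List.isChain_append.2 ⟨hchain, List.isChain_singleton y, ?_⟩)
      (by simp [List.nodup_append, hy, hnodup]; rintro _ h rfl; exact hy h) (by simp)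
    intro p hp q hq
    simp only [List.head?_cons, Option.mem_some_iff] at hq
    rw [hh, Option.mem_some_iff] at hp
    subst hp; subst hq
    exact hadj.symm
  have hA3 : ∀ h ∈ l₀.tail.head?, ¬ G.Adj a h := by
    intro h hh hadj
    have htne : l₀.tail ≠ [] := by intro he; rw [he] at hh; simp at hh
    have hlen2 : 2 ≤ l₀.length := by
      cases l₀ with
      | nil => simp at hh
      | cons p l => cases l with
        | nil => simp at hh
        | cons q l => simp
    refine contra (c :: a :: l₀.tail) (List.isChain_cons.2 ⟨?_, List.isChain_cons.2 ⟨?_, hchain.tail⟩⟩) ?_ ?_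
    · intro z hz; simp only [List.head?_cons, Option.mem_some_iff] at hz; exact hz ▸ hca
    · intro z hz; rw [hh, Option.mem_some_iff] at hz; exact hz ▸ hadj
    · have hsub := l₀.tail_sublist.subset
      simp only [List.nodup_cons]
      refine ⟨?_, ?_, hnodup.sublist l₀.tail_sublist⟩
      · simp only [List.mem_cons]
        push_neg
        exact ⟨hca.ne, fun hmem => hc1 (hsub hmem)⟩
      · exact fun hmem => ha (hsub hmem)
    · simp only [List.length_cons, List.length_tail]
      omega
  have hA4 : ∀ h ∈ l₀.dropLast.getLast?, ¬ G.Adj a h := by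
    intro h hh hadj
    have hsub := l₀.dropLast_sublist.subset
    refine contra (l₀.dropLast ++ [a, c])
      (List.isChain_append.2 ⟨hchain.prefix l₀.dropLast_prefix, by simp [hca.symm], ?_⟩) ?_ ?_
    · intro p hp q hq
      simp only [List.head?_cons, Option.mem_some_iff] at hq
      rw [hh, Option.mem_some_iff] at hp
      subst hp; subst hq
      exact hadj.symm
    · simp only [List.nodup_append, List.nodup_cons]
      refine ⟨hnodup.sublist l₀.dropLast_sublist, ?_, ?_⟩
      · simp [hca.ne']
      · intro z hz w hmem hzw
        subst hzw
        simp only [List.mem_cons, List.not_mem_nil, or_false] at hmem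
        rcases hmem with rfl | rfl
        exacts [ha (hsub hz), hc1 (hsub hz)]
    · have : l₀ ≠ [] := by intro he; rw [he] at hh; simp at hh
      have := List.length_pos_iff.2 this
      simp only [List.length_append, List.length_dropLast]
      simp
      omega
  obtain ⟨s, t, hst⟩ := List.append_of_mem hb
  obtain ⟨v₁, v₂, s', rfl⟩ : ∃ v₁ v₂ s', s = v₁ :: v₂ :: s' := by
    rcases s with _ | ⟨x, _ | ⟨y, s'⟩⟩
    · exact absurd hab (hA1 a ha b (by rw [hst]; simp))
    · exact absurd hab (hA3 b (by rw [hst]; simp))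
    · exact ⟨x, y, s', rfl⟩
  obtain ⟨t', vN1, vN, rfl⟩ : ∃ t' vN1 vN, t = t' ++ [vN1, vN] := by
    rcases ht : t.reverse with _ | ⟨z, _ | ⟨y, r⟩⟩
    · have h0 : t = [] := by rw [← t.reverse_reverse, ht]; rfl
      subst h0
      refine absurd hab (hA2 a ha b ?_)
      rw [hst]
      show (v₁ :: ((v₂ :: s') ++ [b])).getLast? = some b
      rw [show v₁ :: ((v₂ :: s') ++ [b]) = (v₁ :: v₂ :: s') ++ [b] from rfl, List.getLast?_concat]
    · have h0 : t = [z] := by rw [← t.reverse_reverse, ht]; rfl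
      subst h0
      refine absurd hab (hA4 b ?_)
      rw [hst]
      show (v₁ :: ((v₂ :: s') ++ [b, z])).dropLast.getLast? = some b
      rw [show v₁ :: ((v₂ :: s') ++ [b, z]) = (v₁ :: v₂ :: s') ++ [b, z] from rfl,
        List.dropLast_append_of_ne_nil (by simp)]
      show ((v₁ :: v₂ :: s') ++ [b]).getLast? = some b
      rw [List.getLast?_concat]
    · refine ⟨r.reverse, y, z, ?_⟩
      rw [← t.reverse_reverse, ht]
      simp
  have hrev : ∀ (l : List V), Chain' G.Adj l → Chain' G.Adj l.reverse := fun l h =>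
    List.isChain_reverse.2 (h.imp fun _ _ hh => hh.symm)
  have hchain2 : (Chain' G.Adj (v₁ :: v₂ :: s')) ∧ Chain' G.Adj (b :: (t' ++ [vN1, vN])) ∧
      ∀ x ∈ (v₁ :: v₂ :: s').getLast?, ∀ y ∈ (b :: (t' ++ [vN1, vN])).head?, G.Adj x y := by
    rw [hst] at hchain; exact List.isChain_append.1 hchain
  obtain ⟨hcA, hcB, hlinkAB⟩ := hchain2
  have hv1v2 : G.Adj v₁ v₂ := (List.isChain_cons_cons.1 hcA).1
  have hcA2 : Chain' G.Adj (v₂ :: s') := (List.isChain_cons_cons.1 hcA).2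
  have hgAeq : (v₁ :: v₂ :: s').getLast? = some ((v₂ :: s').getLast (by simp)) := by
    rw [List.getLast?_cons_cons, List.getLast?_eq_getLast (by simp)]
  have hgAb : G.Adj ((v₂ :: s').getLast (by simp)) b := by
    refine hlinkAB _ ?_ b (by simp)
    rw [hgAeq]; rfl
  have hcB' : Chain' G.Adj (t' ++ [vN1, vN]) := hcB.tail
  have hcB'parts := List.isChain_append.1 hcB'
  have hct' : Chain' G.Adj t' := hcB'parts.1
  have hvv : G.Adj vN1 vN := by
    have := hcB'parts.2.1
    exact (List.isChain_cons_cons.1 this).1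
  have hlinkt' : ∀ p ∈ t'.getLast?, G.Adj p vN1 := fun p hp =>
    hcB'parts.2.2 p hp vN1 (by simp)
  -- nodup of tail
  have hnodup_tail : ((v₂ :: s') ++ b :: (t' ++ [vN1, vN])).Nodup := by
    rw [hst] at hnodup
    exact (List.nodup_cons.1 hnodup).2
  -- E3 : ¬ G.Adj v₁ vN
  have hv1vN : ¬ G.Adj v₁ vN := by
    intro hadj
    have p1 : ((b :: (t' ++ [vN1, vN])) ++ (v₁ :: v₂ :: s')).Perm l₀ := by
      rw [hst]; exact List.perm_append_comm
    refine contra (a :: (b :: (t' ++ [vN1, vN])) ++ (v₁ :: v₂ :: s')) ?_ ?_ ?_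
    · refine List.isChain_cons.2 ⟨?_, List.isChain_append.2 ⟨hcB, hcA, ?_⟩⟩
      · intro y hy
        have hb : b = y := Option.some.inj hy
        exact hb ▸ hab
      · intro x hx y hy
        rw [show (b :: (t' ++ [vN1, vN])) = (b :: t' ++ [vN1]) ++ [vN] by simp,
          List.getLast?_concat, Option.mem_some_iff] at hx
        simp only [List.head?_cons, Option.mem_some_iff] at hy
        subst hx; subst hy
        exact hadj.symm
    · exact List.nodup_cons.2 ⟨fun hmem => ha (p1.subset hmem), p1.symm.nodup hnodup⟩
    · rw [hst]; simp; all_goals omega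
  -- E4 : ¬ G.Adj vN1 v₁
  have hvN1v1 : ¬ G.Adj vN1 v₁ := by
    intro hadj
    have hsubl : ((v₁ :: v₂ :: s') ++ b :: (t' ++ [vN1])).Sublist l₀ := by
      rw [hst]
      exact List.Sublist.append_left
        (List.Sublist.cons₂ b (List.Sublist.append_left (by simp) t')) _
    have p1 : ((b :: (t' ++ [vN1])) ++ (v₁ :: v₂ :: s')).Perm
        ((v₁ :: v₂ :: s') ++ b :: (t' ++ [vN1])) := List.perm_append_comm
    have hXsub : ∀ z ∈ (b :: (t' ++ [vN1])) ++ (v₁ :: v₂ :: s'), z ∈ l₀ :=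
      fun z hz => hsubl.subset (p1.subset hz)
    refine contra (c :: a :: (b :: (t' ++ [vN1])) ++ (v₁ :: v₂ :: s')) ?_ ?_ ?_
    · refine List.isChain_cons.2 ⟨?_, List.isChain_cons.2 ⟨?_, List.isChain_append.2
        ⟨hcB.prefix (show (b :: (t' ++ [vN1])) <+: b :: (t' ++ [vN1, vN]) from ⟨[vN], by simp⟩), hcA, ?_⟩⟩⟩
      · intro y hy
        have hb : a = y := Option.some.inj hy
        exact hb ▸ hca
      · intro y hy
        have hb : b = y := Option.some.inj hy
        exact hb ▸ hab
      · intro x hx y hy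
        rw [show (b :: (t' ++ [vN1])) = (b :: t') ++ [vN1] by simp,
          List.getLast?_concat, Option.mem_some_iff] at hx
        simp only [List.head?_cons, Option.mem_some_iff] at hy
        subst hx; subst hy
        exact hadj
    · refine List.nodup_cons.2 ⟨?_, List.nodup_cons.2
        ⟨fun hmem => ha (hXsub _ hmem), p1.symm.nodup (hnodup.sublist hsubl)⟩⟩
      · intro hmem
        rcases List.mem_cons.1 hmem with h | h
        exacts [hca.ne h, hc1 (hXsub _ h)]
    · rw [hst]; simp; all_goals omega
  -- reversed-segment chains
  have hcRev1 : Chain' G.Adj (b :: (v₂ :: s').reverse) := by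
    have h1 : Chain' G.Adj ((v₂ :: s') ++ [b]) :=
      List.isChain_append.2 ⟨hcA2, List.isChain_singleton b, by
        intro x hx y hy
        have hy' : b = y := Option.some.inj hy
        rw [List.getLast?_eq_getLast (by simp), Option.mem_some_iff] at hx
        exact hx ▸ hy' ▸ hgAb⟩
    have := hrev _ h1
    rwa [List.reverse_append] at this
  have hrev1last : ((b :: (v₂ :: s').reverse)).getLast? = some v₂ := by
    rw [show b :: (v₂ :: s').reverse = ((v₂ :: s') ++ [b]).reverse by simp,
      List.getLast?_reverse]
    rfl
  -- E4' : ¬ G.Adj v₂ vN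
  have hv2vN : ¬ G.Adj v₂ vN := by
    intro hadj
    have p1 : ((b :: (v₂ :: s').reverse) ++ (t' ++ [vN1, vN]).reverse).Perm
        ((v₂ :: s') ++ b :: (t' ++ [vN1, vN])) := by
      exact (List.Perm.cons b (((v₂ :: s').reverse_perm).append
        ((t' ++ [vN1, vN]).reverse_perm))).trans List.perm_middle.symm
    have hXnodup : ((b :: (v₂ :: s').reverse) ++ (t' ++ [vN1, vN]).reverse).Nodup :=
      p1.symm.nodup hnodup_tail
    have hXsub : ∀ z ∈ (b :: (v₂ :: s').reverse) ++ (t' ++ [vN1, vN]).reverse,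
        z ∈ l₀ := by
      intro z hz
      rw [hst]
      exact List.mem_cons_of_mem _ (p1.subset hz)
    refine contra (c :: a :: (b :: (v₂ :: s').reverse) ++ (t' ++ [vN1, vN]).reverse) ?_ ?_ ?_
    · refine List.isChain_cons.2 ⟨?_, List.isChain_cons.2 ⟨?_, List.isChain_append.2
        ⟨hcRev1, hrev _ hcB', ?_⟩⟩⟩
      · intro y hy
        have h' : a = y := Option.some.inj hy
        exact h' ▸ hca
      · intro y hy
        have h' : b = y := Option.some.inj hy
        exact h' ▸ hab
      · intro x hx y hy
        rw [hrev1last, Option.mem_some_iff] at hx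
        rw [List.head?_reverse, show (t' ++ [vN1, vN]).getLast? = some vN by
          rw [show t' ++ [vN1, vN] = (t' ++ [vN1]) ++ [vN] by simp, List.getLast?_concat],
          Option.mem_some_iff] at hy
        subst hx; subst hy
        exact hadj
    · refine List.nodup_cons.2 ⟨?_, List.nodup_cons.2
        ⟨fun hmem => ha (hXsub _ hmem), hXnodup⟩⟩
      · intro hmem
        rcases List.mem_cons.1 hmem with h | h
        exacts [hca.ne h, hc1 (hXsub _ h)]
    · rw [hst]; simp; all_goals omega
  -- E5 : ¬ G.Adj v₂ vN1
  have hv2vN1 : ¬ G.Adj v₂ vN1 := by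
    intro hadj
    have p1 : ((b :: (v₂ :: s').reverse) ++ (t' ++ [vN1]).reverse).Perm
        ((v₂ :: s') ++ b :: (t' ++ [vN1])) :=
      (List.Perm.cons b (((v₂ :: s').reverse_perm).append ((t' ++ [vN1]).reverse_perm))).trans
        List.perm_middle.symm
    have hsubl : ((v₁ :: v₂ :: s') ++ b :: (t' ++ [vN1])).Sublist l₀ := by
      rw [hst]
      exact List.Sublist.append_left
        (List.Sublist.cons₂ b (List.Sublist.append_left (by simp) t')) _
    have hXsub : ∀ z ∈ (b :: (v₂ :: s').reverse) ++ (t' ++ [vN1]).reverse, z ∈ l₀ :=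
      fun z hz => hsubl.subset (List.mem_cons_of_mem v₁ (p1.subset hz))
    have hXnodup : ((b :: (v₂ :: s').reverse) ++ (t' ++ [vN1]).reverse).Nodup := by
      refine p1.symm.nodup ?_
      have h0 := hnodup.sublist hsubl
      rw [List.cons_append] at h0
      exact (List.nodup_cons.1 h0).2
    have hQchain : Chain' G.Adj
        (c :: a :: (b :: (v₂ :: s').reverse) ++ (t' ++ [vN1]).reverse) := by
      refine List.isChain_cons.2 ⟨?_, List.isChain_cons.2 ⟨?_, List.isChain_append.2
        ⟨hcRev1, hrev _ (hcB'.prefix (show (t' ++ [vN1]) <+: t' ++ [vN1, vN] from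
          ⟨[vN], by simp⟩)), ?_⟩⟩⟩
      · intro y hy
        have h' : a = y := Option.some.inj hy
        exact h' ▸ hca
      · intro y hy
        have h' : b = y := Option.some.inj hy
        exact h' ▸ hab
      · intro x hx y hy
        rw [hrev1last, Option.mem_some_iff] at hx
        rw [List.head?_reverse, List.getLast?_concat, Option.mem_some_iff] at hy
        subst hx; subst hy
        exact hadj
    have hQnodup : (c :: a :: (b :: (v₂ :: s').reverse) ++ (t' ++ [vN1]).reverse).Nodup := by
      refine List.nodup_cons.2 ⟨?_, List.nodup_cons.2
        ⟨fun hmem => ha (hXsub _ hmem), hXnodup⟩⟩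
      intro hmem
      rcases List.mem_cons.1 hmem with h | h
      exacts [hca.ne h, hc1 (hXsub _ h)]
    have hQlen : (c :: a :: (b :: (v₂ :: s').reverse) ++ (t' ++ [vN1]).reverse).length
        = l₀.length := by
      rw [hst]; simp; all_goals omega
    have hcard := hmaxcard _ ⟨hQchain, hQnodup, by simp⟩ hQlen
    -- membership helper
    have hl₀Q : ∀ w ∈ l₀, w ∈ (c :: a :: (b :: (v₂ :: s').reverse) ++ (t' ++ [vN1]).reverse)
        ∨ w = v₁ ∨ w = vN := by
      intro w hw
      rw [hst] at hw
      simp only [List.mem_append, List.mem_cons, List.mem_reverse] at hw ⊢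
      tauto
    have hl₀ncl : ∀ w ∈ l₀, w ∈ nclAux G (c :: a :: (b :: (v₂ :: s').reverse)
        ++ (t' ++ [vN1]).reverse) := by
      intro w hw
      rw [mem_nclAux]
      rcases hl₀Q w hw with h | rfl | rfl
      · exact Or.inl h
      · exact Or.inr ⟨v₂, by simp, hv1v2⟩
      · exact Or.inr ⟨vN1, by simp, hvv.symm⟩
    have hsub : nclAux G l₀ ⊆ nclAux G (c :: a :: (b :: (v₂ :: s').reverse)
        ++ (t' ++ [vN1]).reverse) := by
      intro z hz
      rw [mem_nclAux] at hz
      rcases hz with hz | ⟨y, hy, hzy⟩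
      · exact hl₀ncl z hz
      · rcases hl₀Q y hy with h | h1 | h1
        · exact mem_nclAux.2 (Or.inr ⟨y, h, hzy⟩)
        · rw [h1] at hzy
          have hzmem : z ∈ l₀ := by
            by_contra hzl
            exact hA1 z hzl v₁ (by rw [hst]; rfl) hzy
          exact hl₀ncl z hzmem
        · rw [h1] at hzy
          have hzmem : z ∈ l₀ := by
            by_contra hzl
            refine hA2 z hzl vN ?_ hzy
            rw [hst, show (v₁ :: v₂ :: s') ++ b :: (t' ++ [vN1, vN])
              = ((v₁ :: v₂ :: s') ++ b :: (t' ++ [vN1])) ++ [vN] by simp, List.getLast?_concat]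
            rfl
          exact hl₀ncl z hzmem
    have hcmem : c ∈ nclAux G (c :: a :: (b :: (v₂ :: s').reverse) ++ (t' ++ [vN1]).reverse) :=
      mem_nclAux.2 (Or.inl (by simp))
    have hcnmem : c ∉ nclAux G l₀ := fun h => by
      rcases mem_nclAux.1 h with h' | ⟨y, hy, hcy⟩
      exacts [hc1 h', hc2 y hy hcy]
    have := Finset.card_lt_card (Finset.ssubset_iff_of_subset hsub |>.2 ⟨c, hcmem, hcnmem⟩)
    omega
  -- remaining non-adjacency facts
  have hav1 : ¬ G.Adj a v₁ := fun h => hA1 a ha v₁ (by rw [hst]; rfl) h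
  have hav2 : ¬ G.Adj a v₂ := fun h => hA3 v₂ (by rw [hst]; rfl) h
  have havN : ¬ G.Adj a vN := fun h => by
    refine hA2 a ha vN ?_ h
    rw [hst, show (v₁ :: v₂ :: s') ++ b :: (t' ++ [vN1, vN])
      = ((v₁ :: v₂ :: s') ++ b :: (t' ++ [vN1])) ++ [vN] by simp, List.getLast?_concat]
    rfl
  have havN1 : ¬ G.Adj a vN1 := fun h => by
    refine hA4 vN1 ?_ h
    rw [hst, show (v₁ :: v₂ :: s') ++ b :: (t' ++ [vN1, vN])
      = ((v₁ :: v₂ :: s') ++ b :: (t' ++ [vN1])) ++ [vN] by simp, List.dropLast_concat,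
      show (v₁ :: v₂ :: s') ++ b :: (t' ++ [vN1])
      = ((v₁ :: v₂ :: s') ++ b :: t') ++ [vN1] by simp, List.getLast?_concat]
    rfl
  have hv1mem : v₁ ∈ l₀ := by rw [hst]; simp
  have hv2mem : v₂ ∈ l₀ := by rw [hst]; simp
  have hvN1mem : vN1 ∈ l₀ := by rw [hst]; simp
  have hvNmem : vN ∈ l₀ := by rw [hst]; simp
  -- distinctness
  have hnd := hnodup
  rw [hst, List.cons_append, List.cons_append] at hnd
  have h1 := List.nodup_cons.1 hnd
  have h2 := List.nodup_cons.1 h1.2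
  have d_12 : v₁ ≠ v₂ := fun h => h1.1 (by rw [h]; exact List.mem_cons_self)
  have d_1N1 : v₁ ≠ vN1 := fun h => h1.1 (by rw [h]; simp)
  have d_1N : v₁ ≠ vN := fun h => h1.1 (by rw [h]; simp)
  have d_2N1 : v₂ ≠ vN1 := fun h => h2.1 (by rw [h]; simp)
  have d_2N : v₂ ≠ vN := fun h => h2.1 (by rw [h]; simp)
  have h3 : (t' ++ [vN1, vN]).Nodup := by
    refine h2.2.sublist ?_
    exact (List.sublist_cons_self b _).trans (List.sublist_append_right s' _)
  have h4 : [vN1, vN].Nodup := h3.sublist (List.sublist_append_right t' _)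
  have d_N1N : vN1 ≠ vN := by simpa using (List.nodup_cons.1 h4).1
  exact hfree (embed_aux c a v₁ v₂ vN1 vN hca hv1v2 hvv
    (hc2 v₁ hv1mem) (hc2 v₂ hv2mem) (hc2 vN1 hvN1mem) (hc2 vN hvNmem)
    hav1 hav2 havN1 havN
    (fun h => hvN1v1 h.symm) hv1vN hv2vN1 hv2vN
    hca.ne
    (fun h => hc1 (by rw [h]; exact hv1mem)) (fun h => hc1 (by rw [h]; exact hv2mem))
    (fun h => hc1 (by rw [h]; exact hvN1mem)) (fun h => hc1 (by rw [h]; exact hvNmem))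
    (fun h => ha (by rw [h]; exact hv1mem)) (fun h => ha (by rw [h]; exact hv2mem))
    (fun h => ha (by rw [h]; exact hvN1mem)) (fun h => ha (by rw [h]; exact hvNmem))
    d_12 d_1N1 d_1N d_2N1 d_2N d_N1N)

end Main

/-- Every connected `3P_2`-free graph has a longest path that is dominating. -/
theorem stmt11 {V : Type} [Fintype V] (G : SimpleGraph V) (hconn : G.Connected)
    (hfree : ¬ IsInducedSubgraph (threePath 2) G) :
    ∃ (u v : V) (p : G.Walk u v), p.IsPath ∧
      (∀ (a b : V) (q : G.Walk a b), q.IsPath → q.length ≤ p.length) ∧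
      (∀ x : V, x ∈ p.support ∨ ∃ y ∈ p.support, G.Adj x y) := by
  classical
  obtain ⟨l₀, ⟨hchain, hnodup, hne⟩, hmaxlen, hdom⟩ := main_dom G hconn hfree
  obtain ⟨u, v, p, hp⟩ := exists_walk_of_support l₀ hchain hne
  refine ⟨u, v, p, ?_, ?_, ?_⟩
  · rw [SimpleGraph.Walk.isPath_def, hp]; exact hnodup
  · intro a b q hq
    have hgoodq : IsGoodAux G q.support :=
      ⟨q.isChain_adj_support, (SimpleGraph.Walk.isPath_def _).1 hq, q.support_ne_nil⟩
    have h0 := hmaxlen _ hgoodq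
    have h1 : q.support.length = q.length + 1 := q.length_support
    have h2 : l₀.length = p.length + 1 := by rw [← hp]; exact p.length_support
    omega
  · intro x
    rw [hp]
    exact hdom x
end

section
/- Let G be a connected graph, P a longest path in G with endpoints u, v, and suppose some vertex of G is at distance exactly 2 from P. Then neither endpoint of P has a neighbor outside P, and if u', v' denote the neighbors of u, v on P respectively, then for any vertex y outside P adjacent to an internal vertex of P but having a neighbor at distance 2 from P, y is nonadjacent to each of u, v, u', v'. -/
open SimpleGraph

private lemma aux_second {V : Type} {G : SimpleGraph V} {u v : V} (p : G.Walk u v)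
    (hp : p.IsPath)
    (hlong : ∀ (a b : V) (q : G.Walk a b), q.IsPath → q.length ≤ p.length)
    {u' x y : V} (hu' : p.support[1]? = some u')
    (hxy : G.Adj x y) (hy : y ∉ p.support) (hx : ∀ z ∈ p.support, x ≠ z) :
    ¬ G.Adj y u' := by
  cases p with
  | nil => simp [Walk.support_nil] at hu'
  | @cons _ w _ h q =>
    have hw : w = u' := by
      rw [Walk.support_cons, q.support_eq_cons] at hu'
      simpa using hu'
    subst hw
    intro hadj
    have hq : q.IsPath := hp.of_cons
    have hyq : y ∉ q.support := fun hm => hy (by simp [Walk.support_cons, hm])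
    have hpath : (Walk.cons hxy (Walk.cons hadj q)).IsPath := by
      refine (hq.cons hyq).cons ?_
      simp only [Walk.support_cons, List.mem_cons]
      push_neg
      refine ⟨hxy.ne, fun hm => hx _ (by simp [Walk.support_cons, hm]) rfl⟩
    have := hlong _ _ _ hpath
    simp only [Walk.length_cons] at this
    omega

/-- If `P` is a longest path in a connected graph `G` with endpoints `u, v`, and some
vertex of `G` is at distance exactly `2` from `P`, then neither endpoint of `P` has a
neighbor outside `P`; moreover, if `u'`, `v'` are the neighbors of `u`, `v` along `P`,
then any vertex `y` outside `P` adjacent to an internal vertex of `P` and having a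
neighbor at distance exactly `2` from `P` is nonadjacent to each of `u, v, u', v'`. -/
theorem stmt12 {V : Type} (G : SimpleGraph V) (hconn : G.Connected)
    (u v : V) (p : G.Walk u v) (hp : p.IsPath)
    (hlong : ∀ (a b : V) (q : G.Walk a b), q.IsPath → q.length ≤ p.length)
    (hfar : ∃ z : V, (∀ y ∈ p.support, 2 ≤ G.dist z y) ∧ ∃ y ∈ p.support, G.dist z y = 2) :
    ((∀ w : V, G.Adj u w → w ∈ p.support) ∧ (∀ w : V, G.Adj v w → w ∈ p.support)) ∧
    ∀ u' v' : V, p.support[1]? = some u' → p.reverse.support[1]? = some v' →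
      ∀ y : V, y ∉ p.support →
        (∃ w ∈ p.support, w ≠ u ∧ w ≠ v ∧ G.Adj y w) →
        (∃ x : V, G.Adj y x ∧ (∀ z ∈ p.support, 2 ≤ G.dist x z) ∧
          ∃ z ∈ p.support, G.dist x z = 2) →
        ¬ G.Adj y u ∧ ¬ G.Adj y v ∧ ¬ G.Adj y u' ∧ ¬ G.Adj y v' := by
  
  refine ⟨⟨?_, ?_⟩, ?_⟩
  · intro w hw
    by_contra hws
    have hq : (Walk.cons hw.symm p).IsPath := hp.cons hws
    have := hlong _ _ _ hq
    simp [Walk.length_cons] at this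
  · intro w hw
    by_contra hws
    have hq : (Walk.cons hw.symm p.reverse).IsPath := by
      refine hp.reverse.cons ?_
      simpa [Walk.support_reverse] using hws
    have := hlong _ _ _ hq
    simp [Walk.length_cons] at this
  · intro u' v' hu' hv' y hy _ hx
    obtain ⟨x, hxy, hxdist, -⟩ := hx
    have hxne : ∀ z ∈ p.support, x ≠ z := by
      intro z hz hxz
      have := hxdist _ hz
      rw [← hxz, G.dist_self] at this
      omega
    have hyu : ¬ G.Adj y u := by
      intro h
      have hq : (Walk.cons h p).IsPath := hp.cons hy
      have := hlong _ _ _ hq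
      simp [Walk.length_cons] at this
    have hyv : ¬ G.Adj y v := by
      intro h
      have hq : (Walk.cons h p.reverse).IsPath := by
        refine hp.reverse.cons ?_
        simpa [Walk.support_reverse] using hy
      have := hlong _ _ _ hq
      simp [Walk.length_cons] at this
    refine ⟨hyu, hyv, ?_, ?_⟩
    · exact aux_second p hp hlong hu' hxy.symm hy hxne
    · refine aux_second p.reverse hp.reverse ?_ hv' hxy.symm ?_ ?_
      · intro a b q hq
        simpa [Walk.length_reverse] using hlong a b q hq
      · simpa [Walk.support_reverse] using hy
      · intro z hz
        exact hxne z (by simpa [Walk.support_reverse] using hz)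
end

section
/- If a graph G has a path P whose eccentricity is at most 1, then G has a spanning caterpillar; conversely, if G has a spanning caterpillar, then G has a path of eccentricity at most 1. -/
open SimpleGraph

private lemma auxIdx {V : Type} [DecidableEq V] {G : SimpleGraph V} :
    ∀ {u v : V} (p : G.Walk u v), p.support.Nodup → ∀ {a b : V}, s(a, b) ∈ p.edges →
      p.support.idxOf b = p.support.idxOf a + 1 ∨
      p.support.idxOf a = p.support.idxOf b + 1 := by
  intro u v p
  induction p with
  | nil => intro _ a b h; simp at h
  | @cons u v' w h q ih =>
    intro hnd a b he
    rw [Walk.support_cons, List.nodup_cons] at hnd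
    rw [Walk.edges_cons, List.mem_cons] at he
    rcases he with he | he
    · rw [Sym2.eq_iff] at he
      rcases he with ⟨rfl, rfl⟩ | ⟨rfl, rfl⟩
      · left
        rw [Walk.support_cons, List.idxOf_cons_self, List.idxOf_cons_ne _ h.ne,
          q.support_eq_cons, List.idxOf_cons_self]
      · right
        rw [Walk.support_cons, List.idxOf_cons_self, List.idxOf_cons_ne _ h.ne,
          q.support_eq_cons, List.idxOf_cons_self]
    · have ha := q.fst_mem_support_of_mem_edges he
      have hb := q.snd_mem_support_of_mem_edges he
      have hau : u ≠ a := fun e => hnd.1 (e ▸ ha)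
      have hbu : u ≠ b := fun e => hnd.1 (e ▸ hb)
      rw [Walk.support_cons, List.idxOf_cons_ne _ hau, List.idxOf_cons_ne _ hbu]
      rcases ih hnd.2 he with h1 | h1
      · left; omega
      · right; omega

private lemma auxCycle {V : Type} {H : SimpleGraph V} (ρ : V → ℕ) (π : V → V)
    (hB : ∀ a b : V, H.Adj a b → (b = π a ∧ ρ b < ρ a) ∨ (a = π b ∧ ρ a < ρ b)) :
    ∀ {m : V} (c : H.Walk m m), c.IsCycle → (∀ y ∈ c.support, ρ y ≤ ρ m) → False := by
  intro m c hc hmax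
  cases c with
  | nil => exact Walk.IsCycle.not_of_nil hc
  | @cons _ b _ h q =>
    rw [Walk.cons_isCycle_iff] at hc
    obtain ⟨w', hadj', r, hqe⟩ := Walk.exists_eq_cons_of_ne h.ne q.reverse
    have hmem : s(m, w') ∈ q.edges := by
      have : s(m, w') ∈ q.reverse.edges := by rw [hqe, Walk.edges_cons]; exact List.mem_cons_self
      rwa [Walk.edges_reverse, List.mem_reverse] at this
    have hw's : w' ∈ q.support := by
      have : w' ∈ q.reverse.support := by
        rw [hqe, Walk.support_cons]; exact List.mem_cons_of_mem _ r.start_mem_support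
      rwa [Walk.support_reverse, List.mem_reverse] at this
    have hbs : b ∈ q.support := q.start_mem_support
    have hmaxb : ρ b ≤ ρ m := hmax b (by rw [Walk.support_cons]; exact List.mem_cons_of_mem _ hbs)
    have hmaxw : ρ w' ≤ ρ m := hmax w' (by rw [Walk.support_cons]; exact List.mem_cons_of_mem _ hw's)
    have hb : b = π m := by
      rcases hB m b h with ⟨h1, _⟩ | ⟨_, h2⟩
      · exact h1
      · omega
    have hw : w' = π m := by
      rcases hB m w' hadj' with ⟨h1, _⟩ | ⟨_, h2⟩
      · exact h1
      · omega
    rw [show w' = b from hw.trans hb.symm] at hmem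
    exact hc.2 hmem

/-- A connected graph has a path of eccentricity at most `1` (a dominating path)
iff it has a spanning caterpillar: a spanning subgraph that is a tree possessing a
dominating path. -/
theorem stmt14 {V : Type} (G : SimpleGraph V) (hconn : G.Connected) :
    (∃ (u v : V) (p : G.Walk u v), p.IsPath ∧
        ∀ x : V, x ∈ p.support ∨ ∃ y ∈ p.support, G.Adj x y) ↔
      (∃ H : SimpleGraph V, H ≤ G ∧ H.IsTree ∧
        ∃ (u v : V) (p : H.Walk u v), p.IsPath ∧
          ∀ x : V, x ∈ p.support ∨ ∃ y ∈ p.support, H.Adj x y) := by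
  classical
  constructor
  · rintro ⟨u, v, p, hp, hdom⟩
    have hgex : ∀ x : V, ∃ y : V, x ∉ p.support → y ∈ p.support ∧ G.Adj x y := by
      intro x
      by_cases hx : x ∈ p.support
      · exact ⟨u, fun h => absurd hx h⟩
      · rcases hdom x with hx' | ⟨y, hy, hxy⟩
        · exact absurd hx' hx
        · exact ⟨y, fun _ => ⟨hy, hxy⟩⟩
    choose g hg using hgex
    set S := p.support with hS
    set ρ : V → ℕ := fun y => if y ∈ S then 2 * S.idxOf y else 2 * S.idxOf (g y) + 1 with hρ
    set π : V → V := fun y => if y ∈ S then S.getD (S.idxOf y - 1) y else g y with hπ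
    set H : SimpleGraph V :=
      SimpleGraph.fromRel (fun a b => s(a, b) ∈ p.edges ∨ (a ∉ S ∧ b = g a)) with hH
    have hadjH : ∀ a b : V, H.Adj a b ↔ a ≠ b ∧
        ((s(a, b) ∈ p.edges ∨ (a ∉ S ∧ b = g a)) ∨ (s(b, a) ∈ p.edges ∨ (b ∉ S ∧ a = g b))) := by
      intro a b; rw [hH, fromRel_adj]
    have hle : H ≤ G := by
      intro a b hab
      rw [hadjH] at hab
      rcases hab with ⟨hne, h1 | h1⟩
      · rcases h1 with h1 | ⟨h1, rfl⟩
        · exact p.adj_of_mem_edges h1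
        · exact (hg a h1).2
      · rcases h1 with h1 | ⟨h1, rfl⟩
        · exact (p.adj_of_mem_edges h1).symm
        · exact (hg b h1).2.symm
    have hgetD : ∀ z ∈ S, ∀ d : V, S.getD (S.idxOf z) d = z := by
      intro z hz d
      rw [List.getD_eq_getElem _ _ (List.idxOf_lt_length_iff.mpr hz)]
      exact List.getElem_idxOf _
    have hB0 : ∀ a b : V, (s(a, b) ∈ p.edges ∨ (a ∉ S ∧ b = g a)) →
        (b = π a ∧ ρ b < ρ a) ∨ (a = π b ∧ ρ a < ρ b) := by
      intro a b hr
      rcases hr with hr | ⟨ha, rfl⟩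
      · have ha : a ∈ S := p.fst_mem_support_of_mem_edges hr
        have hb : b ∈ S := p.snd_mem_support_of_mem_edges hr
        rcases auxIdx p hp.support_nodup hr with h1 | h1 <;> rw [show p.support = S from hS.symm] at h1
        · right
          constructor
          · rw [hπ]; simp only [if_pos hb, h1, Nat.add_sub_cancel]
            exact (hgetD a ha b).symm
          · rw [hρ]; simp only [if_pos ha, if_pos hb]; omega
        · left
          constructor
          · rw [hπ]; simp only [if_pos ha, h1, Nat.add_sub_cancel]
            exact (hgetD b hb a).symm
          · rw [hρ]; simp only [if_pos ha, if_pos hb]; omega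
      · left
        have hga : g a ∈ S := (hg a ha).1
        constructor
        · rw [hπ]; simp only [if_neg ha]
        · rw [hρ]; simp only [if_neg ha, if_pos hga]; omega
    have hB : ∀ a b : V, H.Adj a b → (b = π a ∧ ρ b < ρ a) ∨ (a = π b ∧ ρ a < ρ b) := by
      intro a b hab
      rw [hadjH] at hab
      rcases hab.2 with h1 | h1
      · exact hB0 a b h1
      · exact (hB0 b a h1).symm
    have hpe : ∀ e ∈ p.edges, e ∈ H.edgeSet := by
      intro e he
      induction e with
      | h a b =>
        rw [mem_edgeSet, hadjH]
        exact ⟨(p.adj_of_mem_edges he).ne, Or.inl (Or.inl he)⟩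
    have hpH : (p.transfer H hpe).IsPath := hp.transfer hpe
    have hsupp : (p.transfer H hpe).support = p.support := Walk.support_transfer p hpe
    have hreach : ∀ x : V, H.Reachable u x := by
      intro x
      by_cases hx : x ∈ S
      · have hx' : x ∈ (p.transfer H hpe).support := by rwa [hsupp]
        exact ⟨(p.transfer H hpe).takeUntil x hx'⟩
      · have hadj : H.Adj x (g x) := by
          rw [hadjH]
          refine ⟨fun e => hx (e ▸ (hg x hx).1), Or.inl (Or.inr ⟨hx, rfl⟩)⟩
        have h1 : H.Reachable u (g x) := by
          have hx' : g x ∈ (p.transfer H hpe).support := by rw [hsupp]; exact (hg x hx).1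
          exact ⟨(p.transfer H hpe).takeUntil (g x) hx'⟩
        exact h1.trans hadj.symm.reachable
    haveI : Nonempty V := ⟨u⟩
    have hconnH : H.Connected := Connected.mk fun a b => (hreach a).symm.trans (hreach b)
    have hacyc : H.IsAcyclic := by
      intro x c hc
      obtain ⟨m, hmS, hmax⟩ := Finset.exists_max_image c.support.toFinset ρ
        ⟨x, List.mem_toFinset.mpr c.start_mem_support⟩
      rw [List.mem_toFinset] at hmS
      have hmax' : ∀ y ∈ c.support, ρ y ≤ ρ m := fun y hy => hmax y (List.mem_toFinset.mpr hy)
      refine auxCycle ρ π hB (c.rotate m hmS) (hc.rotate hmS) ?_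
      intro y hy
      apply hmax'
      rw [Walk.mem_support_iff] at hy
      rcases hy with rfl | hy
      · exact hmS
      · rw [Walk.mem_support_iff]
        exact Or.inr ((Walk.support_rotate c m hmS).mem_iff.mp hy)
    refine ⟨H, hle, ⟨hconnH, hacyc⟩, u, v, p.transfer H hpe, hpH, ?_⟩
    intro x
    rw [hsupp]
    by_cases hx : x ∈ S
    · exact Or.inl hx
    · refine Or.inr ⟨g x, (hg x hx).1, ?_⟩
      rw [hadjH]
      exact ⟨fun e => hx (e ▸ (hg x hx).1), Or.inl (Or.inr ⟨hx, rfl⟩)⟩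
  · rintro ⟨H, hle, htree, u, v, p, hp, hdom⟩
    have hpe : ∀ e ∈ p.edges, e ∈ G.edgeSet := fun e he =>
      SimpleGraph.edgeSet_mono hle (p.edges_subset_edgeSet he)
    refine ⟨u, v, p.transfer G hpe, hp.transfer hpe, ?_⟩
    intro x
    rw [Walk.support_transfer]
    rcases hdom x with hx | ⟨y, hy, hxy⟩
    · exact Or.inl hx
    · exact Or.inr ⟨y, hy, hle hxy⟩
end

section
/- If three intervals on a linearly ordered finite set pairwise intersect, then one of the three intervals is contained in the union of the other two. -/
open SimpleGraph

lemma stmt16_key {α : Type} [LinearOrder α] (A C : Set α)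
    (hA : ∀ x y z : α, x ≤ y → y ≤ z → x ∈ A → z ∈ A → y ∈ A)
    (hC : ∀ x y z : α, x ≤ y → y ≤ z → x ∈ C → z ∈ C → y ∈ C)
    (x y z r : α) (hxy : x ≤ y) (hyz : y ≤ z)
    (hx : x ∈ A) (hz : z ∈ C) (hrA : r ∈ A) (hrC : r ∈ C)
    (hyA : y ∉ A) (hyC : y ∉ C) : False := by
  rcases le_total y r with h | h
  · exact hyA (hA x y r hxy h hx hrA)
  · exact hyC (hC r y z h hyz hrC hz)

/-- If three intervals (order-convex sets) on a linearly ordered finite set pairwise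
intersect, then one of them is contained in the union of the other two. -/
theorem stmt16 {α : Type} [LinearOrder α] [Fintype α] (A B C : Set α)
    (hA : ∀ x y z : α, x ≤ y → y ≤ z → x ∈ A → z ∈ A → y ∈ A)
    (hB : ∀ x y z : α, x ≤ y → y ≤ z → x ∈ B → z ∈ B → y ∈ B)
    (hC : ∀ x y z : α, x ≤ y → y ≤ z → x ∈ C → z ∈ C → y ∈ C)
    (hAB : (A ∩ B).Nonempty) (hBC : (B ∩ C).Nonempty) (hAC : (A ∩ C).Nonempty) :
    A ⊆ B ∪ C ∨ B ⊆ A ∪ C ∨ C ⊆ A ∪ B := by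
  by_contra h
  push_neg at h
  obtain ⟨hnA, hnB, hnC⟩ := h
  obtain ⟨x, hxA, hx⟩ := Set.not_subset.mp hnA
  obtain ⟨y, hyB, hy⟩ := Set.not_subset.mp hnB
  obtain ⟨z, hzC, hz⟩ := Set.not_subset.mp hnC
  simp only [Set.mem_union, not_or] at hx hy hz
  obtain ⟨u, huA, huB⟩ := hAB
  obtain ⟨v, hvB, hvC⟩ := hBC
  obtain ⟨w, hwA, hwC⟩ := hAC
  rcases le_total x y with h1 | h1 <;> rcases le_total y z with h2 | h2 <;>
    rcases le_total x z with h3 | h3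
  · exact stmt16_key A C hA hC x y z w h1 h2 hxA hzC hwA hwC hy.1 hy.2
  · exact stmt16_key A C hA hC x y z w h1 h2 hxA hzC hwA hwC hy.1 hy.2
  · exact stmt16_key A B hA hB x z y u h3 h2 hxA hyB huA huB hz.1 hz.2
  · exact stmt16_key C B hC hB z x y v h3 h1 hzC hyB hvC hvB hx.2 hx.1
  · exact stmt16_key B C hB hC y x z v h1 h3 hyB hzC hvB hvC hx.1 hx.2
  · exact stmt16_key B A hB hA y z x u h2 h3 hyB hxA huB huA hz.2 hz.1
  · exact stmt16_key C A hC hA z y x w h2 h1 hzC hxA hwC hwA hy.2 hy.1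
  · exact stmt16_key C A hC hA z y x w h2 h1 hzC hxA hwC hwA hy.2 hy.1
end
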